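/- Let u_{km} = x_k ⋯ x_m and consider the set B of super-letters [u_{km}], 1 ≤ k ≤ m ≤ n, for type Aₙ. For each of the following super-letters [u], every super-word in super-letters from B strictly smaller than [u] has a different multidegree (constitution) than [u]: (i) [x_k u_{k+1,s}] satisfies deg_k > deg_{s+1}; (ii) [x_k u_{rs}] with k ≤ r ≠ k+1 satisfies deg_k > deg_{k+1}; (iii) [u_{km} u_{k+1,s}] with m ≥ s satisfies deg_k > deg_{m+1}; (iv) [u_{km} u_{ks}] with m < s satisfies deg_k > deg_{m+1}. In particular, no power [u_{km}]^h has the same constitution as any super-word in smaller super-letters from B. -/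

import Mathlib

/-- Letters are natural numbers with the order `x_k > x_{k+1} > …`.  Word
order: `u < v` iff `v` is a proper prefix of `u`, or at the first differing
position the letter of `u` is smaller (i.e. its index is bigger). -/
def wltN (u v : List ℕ) : Prop :=
  (v <+: u ∧ v ≠ u) ∨
    ∃ (w : List ℕ) (a b : ℕ) (u' v' : List ℕ),
      u = w ++ a :: u' ∧ v = w ++ b :: v' ∧ b < a

/-- `uW k m` is the word `x_k x_{k+1} ⋯ x_m`. -/
def uW (k m : ℕ) : List ℕ := List.range' k (m + 1 - k)

lemma uW_count (k m i : ℕ) : (uW k m).count i = if k ≤ i ∧ i ≤ m then 1 else 0 := by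
  unfold uW
  by_cases hkm : k ≤ m
  · by_cases hi : k ≤ i ∧ i ≤ m
    · rw [if_pos hi]
      apply List.count_eq_one_of_mem (List.nodup_range' 1)
      rw [List.mem_range']
      exact ⟨i - k, by omega, by omega⟩
    · rw [if_neg hi]
      apply List.count_eq_zero_of_not_mem
      rw [List.mem_range']
      rintro ⟨j, hj, rfl⟩
      omega
  · have : m + 1 - k = 0 := by omega
    rw [this, if_neg (by omega)]
    simp

lemma uW_ne_nil {k m : ℕ} (h : k ≤ m) : uW k m ≠ [] := by
  unfold uW
  have : m + 1 - k = (m - k) + 1 := by omega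
  rw [this, List.range'_succ]
  simp

lemma uW_head? {k m : ℕ} (h : k ≤ m) : (uW k m).head? = some k := by
  unfold uW
  rw [List.head?_range']
  rw [if_neg (by omega)]

lemma uW_prefix {k a b : ℕ} (hk : k ≤ a) (hab : a ≤ b) : uW k a <+: uW k b := by
  refine ⟨List.range' (a + 1) (b - a), ?_⟩
  unfold uW
  have h1 : a + 1 = k + (a + 1 - k) := by omega
  have h2 : b + 1 - k = (b - a) + (a + 1 - k) := by omega
  rw [h2, Nat.add_comm (b - a), ← List.range'_append_1 (s := k) (m := a + 1 - k) (n := b - a), ← h1]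

lemma wltN_irrefl (u : List ℕ) : ¬ wltN u u := by
  rintro (⟨_, h⟩ | ⟨v, a, b, u', v', h1, h2, hab⟩)
  · exact h rfl
  · rw [h1] at h2
    have := List.append_cancel_left h2
    simp at this
    omega

lemma wltN_not_prefix {u c : List ℕ} (h : wltN u c) : ¬ u <+: c := by
  intro hp
  rcases h with ⟨hc, hne⟩ | ⟨v, a, b, u', v', h1, h2, hab⟩
  · exact hne (hc.eq_of_length (Nat.le_antisymm hc.length_le hp.length_le))
  · obtain ⟨r, hr⟩ := hp
    rw [h1, h2, List.append_assoc] at hr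
    have := List.append_cancel_left hr
    simp at this
    omega

lemma wltN_head {a b : ℕ} {u' c' : List ℕ} (h : wltN (a :: u') (b :: c')) : b ≤ a := by
  rcases h with ⟨⟨r, hr⟩, _⟩ | ⟨v, x, y, u'', v'', h1, h2, hxy⟩
  · cases hr
    rfl
  · cases v with
    | nil =>
      simp at h1 h2
      omega
    | cons z v =>
      simp at h1 h2
      omega

/-- Key structural lemma: if `uW q1 q2 < uW k m ++ r` and `q1 ≤ k ≤ q2`,
then `q1 = k` and `q2 ≥ m + 1`. -/
lemma key_lemma {k m q1 q2 : ℕ} (r : List ℕ) (hkm : k ≤ m) (hq : q1 ≤ q2)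
    (h1 : q1 ≤ k) (h2 : k ≤ q2) (hw : wltN (uW q1 q2) (uW k m ++ r)) :
    q1 = k ∧ m + 1 ≤ q2 := by
  -- first, heads
  have hu : uW q1 q2 ≠ [] := uW_ne_nil hq
  have hc : uW k m ≠ [] := uW_ne_nil hkm
  obtain ⟨a, u', hu'⟩ := List.exists_cons_of_ne_nil hu
  obtain ⟨b, c', hc'⟩ := List.exists_cons_of_ne_nil hc
  have ha : a = q1 := by
    have := uW_head? hq
    rw [hu'] at this
    simpa using this
  have hb : b = k := by
    have := uW_head? hkm
    rw [hc'] at this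
    simpa using this
  have hq1k : q1 = k := by
    rw [hu', hc'] at hw
    rw [List.cons_append] at hw
    have := wltN_head hw
    omega
  refine ⟨hq1k, ?_⟩
  by_contra hlt
  have hq2m : q2 ≤ m := by omega
  have hpre : uW q1 q2 <+: uW k m ++ r := by
    rw [hq1k]
    exact (uW_prefix h2 hq2m).trans (List.prefix_append _ _)
  exact wltN_not_prefix hw hpre

lemma uW_self (k : ℕ) : uW k k = [k] := by
  unfold uW
  have : k + 1 - k = 1 := by omega
  rw [this]
  rfl

lemma count_le_of_wlt {k m : ℕ} (r : List ℕ) (hkm : k ≤ m) {q1 q2 : ℕ} (hq : q1 ≤ q2)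
    (hw : wltN (uW q1 q2) (uW k m ++ r)) :
    (uW q1 q2).count k ≤ (uW q1 q2).count (m + 1) := by
  rw [uW_count, uW_count]
  by_cases h : q1 ≤ k ∧ k ≤ q2
  · obtain ⟨hq1, hmq2⟩ := key_lemma r hkm hq h.1 h.2 hw
    split_ifs <;> omega
  · rw [if_neg h]
    omega

lemma flatten_count_le (k t : ℕ) (L : List (ℕ × ℕ))
    (h : ∀ q ∈ L, (uW q.1 q.2).count k ≤ (uW q.1 q.2).count t) :
    ((L.map (fun q => uW q.1 q.2)).flatten).count k ≤
      ((L.map (fun q => uW q.1 q.2)).flatten).count t := by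
  induction L with
  | nil => simp
  | cons q L ih =>
    simp only [List.map_cons, List.flatten_cons, List.count_append]
    have h1 := h q (List.mem_cons_self)
    have h2 := ih (fun q hq => h q (List.mem_cons_of_mem _ hq))
    omega

theorem stmt_14 (n : ℕ) (c w : List ℕ)
    (hw :
      (∃ k s, 1 ≤ k ∧ k + 1 ≤ s ∧ s ≤ n ∧ w = uW k s ∧ c = w) ∨
      (∃ k r s, 1 ≤ k ∧ k ≤ r ∧ r ≠ k + 1 ∧ r ≤ s ∧ s ≤ n ∧
        w = k :: uW r s ∧ c = w) ∨
      (∃ k m s, 1 ≤ k ∧ k ≤ m ∧ k + 1 ≤ s ∧ s ≤ m ∧ m ≤ n ∧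
        w = uW k m ++ uW (k + 1) s ∧ c = w) ∨
      (∃ k m s, 1 ≤ k ∧ k ≤ m ∧ m < s ∧ s ≤ n ∧
        w = uW k m ++ uW k s ∧ c = w) ∨
      (∃ k m h, 1 ≤ k ∧ k ≤ m ∧ m ≤ n ∧ 1 ≤ h ∧
        w = (List.replicate h (uW k m)).flatten ∧ c = uW k m)) :
    ∀ L : List (ℕ × ℕ),
      (∀ q ∈ L, 1 ≤ q.1 ∧ q.1 ≤ q.2 ∧ q.2 ≤ n ∧ wltN (uW q.1 q.2) c) →
      ¬ (∀ i : ℕ, ((L.map (fun q => uW q.1 q.2)).flatten).count i = w.count i) := by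
  have main : ∃ k t : ℕ, w.count t < w.count k ∧
      ∀ q1 q2 : ℕ, q1 ≤ q2 → wltN (uW q1 q2) c →
        (uW q1 q2).count k ≤ (uW q1 q2).count t := by
    rcases hw with ⟨k, s, hk, hks, hsn, hwv, hcv⟩ |
        ⟨k, r, s, hk, hkr, hrk, hrs, hsn, hwv, hcv⟩ |
        ⟨k, m, s, hk, hkm, hks, hsm, hmn, hwv, hcv⟩ |
        ⟨k, m, s, hk, hkm, hms, hsn, hwv, hcv⟩ |
        ⟨k, m, h, hk, hkm, hmn, hh, hwv, hcv⟩
    · refine ⟨k, s + 1, ?_, ?_⟩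
      · rw [hwv, uW_count, uW_count]
        split_ifs <;> omega
      · intro q1 q2 hq hwlt
        rw [hcv, hwv, ← List.append_nil (uW k s)] at hwlt
        exact count_le_of_wlt [] (by omega) hq hwlt
    · refine ⟨k, k + 1, ?_, ?_⟩
      · rw [hwv]
        simp only [List.count_cons, uW_count]
        split_ifs <;> simp_all <;> omega
      · intro q1 q2 hq hwlt
        have heq : k :: uW r s = uW k k ++ uW r s := by
          rw [uW_self]
          rfl
        rw [hcv, hwv, heq] at hwlt
        exact count_le_of_wlt (uW r s) le_rfl hq hwlt
    · refine ⟨k, m + 1, ?_, ?_⟩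
      · rw [hwv]
        simp only [List.count_append, uW_count]
        split_ifs <;> omega
      · intro q1 q2 hq hwlt
        rw [hcv, hwv] at hwlt
        exact count_le_of_wlt _ hkm hq hwlt
    · refine ⟨k, m + 1, ?_, ?_⟩
      · rw [hwv]
        simp only [List.count_append, uW_count]
        split_ifs <;> omega
      · intro q1 q2 hq hwlt
        rw [hcv, hwv] at hwlt
        exact count_le_of_wlt _ hkm hq hwlt
    · refine ⟨k, m + 1, ?_, ?_⟩
      · rw [hwv]
        simp only [List.count_flatten, List.map_replicate, List.sum_replicate,
          smul_eq_mul, uW_count]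
        split_ifs <;> omega
      · intro q1 q2 hq hwlt
        rw [hcv, ← List.append_nil (uW k m)] at hwlt
        exact count_le_of_wlt [] hkm hq hwlt
  intro L hL hcnt
  obtain ⟨k, t, hwc, hle⟩ := main
  have h1 : ((L.map (fun q => uW q.1 q.2)).flatten).count k ≤
      ((L.map (fun q => uW q.1 q.2)).flatten).count t := by
    apply flatten_count_le
    intro q hq
    obtain ⟨_, hq12, _, hwlt⟩ := hL q hq
    exact hle q.1 q.2 hq12 hwlt
  rw [hcnt k, hcnt t] at h1
  omega
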